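/- Every continuous piecewise polynomial function f: ℝ → ℝ (with finitely many polynomial pieces) can be written as a finite supremum of finite infima of polynomials: f = ⋁ᵢ ⋀ⱼ qᵢⱼ for polynomials qᵢⱼ ∈ ℝ[x]. (Pierce-Birkhoff conjecture in dimension 1.) -/

import Mathlib

open Polynomial

lemma polybnd (r : ℝ[X]) (δ : ℝ) (hδ : 0 < δ) (N : ℕ) (hN : r.natDegree ≤ N) :
    ∃ C : ℝ, 0 ≤ C ∧ ∀ y : ℝ, δ ≤ y → r.eval y ≤ C * y ^ N := by
  set δ' : ℝ := min δ 1 with hδ'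
  have hδ'0 : 0 < δ' := lt_min hδ one_pos
  set S : ℝ := ∑ k ∈ Finset.range (N + 1), |r.coeff k| with hS
  have hS0 : 0 ≤ S := Finset.sum_nonneg fun k _ => abs_nonneg _
  refine ⟨S / δ' ^ N, div_nonneg hS0 (le_of_lt (pow_pos hδ'0 N)), fun y hy => ?_⟩
  have hy0 : 0 < y := lt_of_lt_of_le hδ hy
  have hδ'y : δ' ≤ y := le_trans (min_le_left _ _) hy
  rw [Polynomial.eval_eq_sum_range' (lt_of_le_of_lt hN (Nat.lt_succ_self N))]
  have key : ∀ k ∈ Finset.range (N + 1), r.coeff k * y ^ k ≤ (|r.coeff k| / δ' ^ N) * y ^ N := by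
    intro k hk
    rw [Finset.mem_range, Nat.lt_succ_iff] at hk
    have h1 : y ^ k * δ' ^ N ≤ y ^ N := by
      have h2 : δ' ^ N ≤ y ^ (N - k) := by
        calc δ' ^ N = δ' ^ (N - k) * δ' ^ k := by rw [← pow_add]; congr 1; omega
        _ ≤ (min y 1) ^ (N - k) * 1 := by
            apply mul_le_mul
            · exact pow_le_pow_left₀ (le_of_lt hδ'0) (le_min hδ'y (min_le_right _ _)) _
            · exact pow_le_one₀ (le_of_lt hδ'0) (min_le_right _ _)
            · positivity
            · positivity
        _ ≤ y ^ (N - k) := by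
            rw [mul_one]
            exact pow_le_pow_left₀ (le_min (le_of_lt hy0) zero_le_one) (min_le_left _ _) _
      calc y ^ k * δ' ^ N ≤ y ^ k * y ^ (N - k) := by
            exact mul_le_mul_of_nonneg_left h2 (by positivity)
      _ = y ^ N := by rw [← pow_add]; congr 1; omega
    calc r.coeff k * y ^ k ≤ |r.coeff k| * y ^ k :=
          mul_le_mul_of_nonneg_right (le_abs_self _) (by positivity)
    _ ≤ |r.coeff k| * (y ^ N / δ' ^ N) := by
        apply mul_le_mul_of_nonneg_left _ (abs_nonneg _)
        rw [le_div_iff₀ (pow_pos hδ'0 N)]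
        linarith [h1]
    _ = (|r.coeff k| / δ' ^ N) * y ^ N := by ring
  calc ∑ k ∈ Finset.range (N + 1), r.coeff k * y ^ k
      ≤ ∑ k ∈ Finset.range (N + 1), (|r.coeff k| / δ' ^ N) * y ^ N := Finset.sum_le_sum key
  _ = S / δ' ^ N * y ^ N := by rw [hS, Finset.sum_div, Finset.sum_mul]

lemma leftguard (t δ : ℝ) (hδ : 0 < δ) (g q : ℝ[X]) (hgq : g.eval t = q.eval t)
    (s : Finset ℝ[X]) :
    ∃ L : ℝ[X], (∀ x : ℝ, t - δ ≤ x → x ≤ t → L.eval x ≤ q.eval x) ∧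
      (∀ x : ℝ, x ≤ t - δ → ∀ p ∈ s, L.eval x ≤ p.eval x) ∧
      (∀ x : ℝ, t ≤ x → g.eval x ≤ L.eval x) := by
  -- reflected polynomials in y = t - x
  set rp : ℝ[X] → ℝ[X] := fun p => (g - p).comp (Polynomial.C t - Polynomial.X) with hrp
  have hrpe : ∀ (p : ℝ[X]) (y : ℝ), (rp p).eval y = g.eval (t - y) - p.eval (t - y) := by
    intro p y; simp [hrp]
  set N : ℕ := 2 * (s.sup fun p => (rp p).natDegree) + 1 with hN
  have hNodd : Odd N := ⟨_, rfl⟩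
  have hNdeg : ∀ p ∈ s, (rp p).natDegree ≤ N := by
    intro p hp
    have h := Finset.le_sup (f := fun p => (rp p).natDegree) hp
    omega
  -- constants from polybnd
  set Cf : ℝ[X] → ℝ := fun p =>
    if h : (rp p).natDegree ≤ N then (polybnd (rp p) δ hδ N h).choose else 0 with hCf
  have hCfspec : ∀ p ∈ s, 0 ≤ Cf p ∧ ∀ y : ℝ, δ ≤ y → (rp p).eval y ≤ Cf p * y ^ N := by
    intro p hp
    have h := hNdeg p hp
    simp only [hCf, dif_pos h]
    exact (polybnd (rp p) δ hδ N h).choose_spec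
  -- near bound: factor g - q
  obtain ⟨u, hu⟩ : Polynomial.X - Polynomial.C t ∣ (g - q) := by
    rw [Polynomial.dvd_iff_isRoot]
    simp [Polynomial.IsRoot, hgq]
  obtain ⟨M, hM⟩ := (isCompact_Icc (a := t - δ) (b := t)).exists_bound_of_continuousOn
    (f := fun x => u.eval x) (Polynomial.continuous u).continuousOn
  set C : ℝ := max (max M 0) ((insert (0:ℝ) (s.image Cf)).max' (by simp)) with hC
  have hC0 : 0 ≤ C := le_trans (le_max_right M 0) (le_max_left _ _)
  have hCM : M ≤ C := le_trans (le_max_left M 0) (le_max_left _ _)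
  have hCCf : ∀ p ∈ s, Cf p ≤ C := fun p hp =>
    le_trans (Finset.le_max' _ _ (Finset.mem_insert_of_mem (Finset.mem_image_of_mem Cf hp)))
      (le_max_right _ _)
  refine ⟨g - Polynomial.C C * ((Polynomial.C t - Polynomial.X) +
      (Polynomial.C t - Polynomial.X) ^ N), ?_, ?_, ?_⟩
  · -- near region
    intro x hx1 hx2
    simp only [Polynomial.eval_sub, Polynomial.eval_mul, Polynomial.eval_add,
      Polynomial.eval_pow, Polynomial.eval_C, Polynomial.eval_X]
    have h1 : g.eval x - q.eval x ≤ C * (t - x) := by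
      have hgqx : g.eval x - q.eval x = (x - t) * u.eval x := by
        have := congrArg (Polynomial.eval x) hu
        simpa using this
      rw [hgqx]
      have hux : |u.eval x| ≤ M := by
        have := hM x ⟨hx1, hx2⟩; simpa using this
      have h2 : (x - t) * u.eval x ≤ (t - x) * |u.eval x| := by
        have hplus : 0 ≤ |u.eval x| + u.eval x := by linarith [neg_abs_le (u.eval x)]
        have hmul := mul_nonneg (sub_nonneg.2 hx2) hplus
        nlinarith [hmul]
      calc (x - t) * u.eval x ≤ (t - x) * |u.eval x| := h2
        _ ≤ (t - x) * M := mul_le_mul_of_nonneg_left hux (by linarith)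
        _ ≤ C * (t - x) := by nlinarith [abs_nonneg (u.eval x), le_trans (abs_nonneg (u.eval x)) hux]
    have h3 : 0 ≤ C * (t - x) ^ N := mul_nonneg hC0 (pow_nonneg (by linarith) N)
    nlinarith
  · -- far region
    intro x hx p hp
    simp only [Polynomial.eval_sub, Polynomial.eval_mul, Polynomial.eval_add,
      Polynomial.eval_pow, Polynomial.eval_C, Polynomial.eval_X]
    set y : ℝ := t - x with hy
    have hyδ : δ ≤ y := by simp [hy]; linarith
    have hy0 : 0 < y := lt_of_lt_of_le hδ hyδ
    obtain ⟨hCf0, hCfb⟩ := hCfspec p hp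
    have h1 : g.eval x - p.eval x ≤ Cf p * y ^ N := by
      have := hCfb y hyδ
      rw [hrpe p y] at this
      have hxy : t - y = x := by simp [hy]
      rwa [hxy] at this
    have h2 : Cf p * y ^ N ≤ C * y ^ N :=
      mul_le_mul_of_nonneg_right (hCCf p hp) (by positivity)
    have h3 : 0 ≤ C * y := mul_nonneg hC0 (le_of_lt hy0)
    nlinarith
  · -- right side: L ≥ g
    intro x hx
    simp only [Polynomial.eval_sub, Polynomial.eval_mul, Polynomial.eval_add,
      Polynomial.eval_pow, Polynomial.eval_C, Polynomial.eval_X]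
    have h1 : t - x ≤ 0 := by linarith
    have h2 : (t - x) ^ N ≤ 0 := hNodd.pow_nonpos h1
    nlinarith

lemma rightguard (t δ : ℝ) (hδ : 0 < δ) (g q : ℝ[X]) (hgq : g.eval t = q.eval t)
    (s : Finset ℝ[X]) :
    ∃ R : ℝ[X], (∀ x : ℝ, t ≤ x → x ≤ t + δ → R.eval x ≤ q.eval x) ∧
      (∀ x : ℝ, t + δ ≤ x → ∀ p ∈ s, R.eval x ≤ p.eval x) ∧
      (∀ x : ℝ, x ≤ t → g.eval x ≤ R.eval x) := by
  set neg : ℝ[X] → ℝ[X] := fun p => p.comp (-Polynomial.X) with hneg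
  have hnege : ∀ (p : ℝ[X]) (y : ℝ), (neg p).eval y = p.eval (-y) := by
    intro p y; simp [hneg]
  obtain ⟨L, hL1, hL2, hL3⟩ := leftguard (-t) δ hδ (neg g) (neg q)
    (by rw [hnege, hnege, neg_neg]; exact hgq) (s.image neg)
  refine ⟨neg L, ?_, ?_, ?_⟩
  · intro x hx1 hx2
    rw [hnege]
    have := hL1 (-x) (by linarith) (by linarith)
    rwa [hnege, neg_neg] at this
  · intro x hx p hp
    rw [hnege]
    have := hL2 (-x) (by linarith) (neg p) (Finset.mem_image_of_mem neg hp)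
    rwa [hnege, neg_neg] at this
  · intro x hx
    rw [hnege]
    have := hL3 (-x) (by linarith)
    rwa [hnege, neg_neg] at this

lemma constancy (f : ℝ → ℝ) (hcont : Continuous f) (s : Finset ℝ[X])
    (U : Set ℝ) (hU : IsPreconnected U) (hne : U.Nonempty)
    (hcov : ∀ x ∈ U, ∃ p ∈ s, f x = p.eval x)
    (hfree : ∀ x ∈ U, ∀ p ∈ s, ∀ q ∈ s, p ≠ q → p.eval x ≠ q.eval x) :
    ∃ p ∈ s, ∀ x ∈ U, f x = p.eval x := by
  classical
  -- induct on a sub-finset s' covering U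
  suffices h : ∀ s' : Finset ℝ[X], s' ⊆ s → (∀ x ∈ U, ∃ p ∈ s', f x = p.eval x) →
      ∃ p ∈ s', ∀ x ∈ U, f x = p.eval x by
    obtain ⟨p, hp, hpe⟩ := h s (subset_refl s) hcov
    exact ⟨p, hp, hpe⟩
  intro s'
  induction s' using Finset.induction_on with
  | empty =>
    intro _ hcov'
    obtain ⟨x, hx⟩ := hne
    obtain ⟨p, hp, _⟩ := hcov' x hx
    exact absurd hp (Finset.notMem_empty p)
  | @insert a s'' ha' ih =>
    intro hsub hcov'
    set u : Set ℝ := {x | f x = a.eval x} with hu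
    set v : Set ℝ := ⋃ p ∈ (s'' : Set ℝ[X]), {x | f x = p.eval x} with hv
    have hucl : IsClosed u := isClosed_eq hcont (Polynomial.continuous a)
    have hvcl : IsClosed v := by
      apply Set.Finite.isClosed_biUnion (Finset.finite_toSet s'')
      intro p _
      exact isClosed_eq hcont (Polynomial.continuous p)
    have hcup : U ⊆ u ∪ v := by
      intro x hx
      obtain ⟨p, hp, hpe⟩ := hcov' x hx
      rcases Finset.mem_insert.mp hp with rfl | hp'
      · exact Or.inl hpe
      · exact Or.inr (Set.mem_biUnion hp' hpe)
    have hdisj : U ∩ (u ∩ v) = ∅ := by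
      rw [Set.eq_empty_iff_forall_notMem]
      rintro x ⟨hxU, hxu, hxv⟩
      simp only [hv, Set.mem_iUnion, Set.mem_setOf_eq] at hxv
      obtain ⟨p, hp, hpe⟩ := hxv
      simp only [Finset.mem_coe] at hp
      have hxu' : f x = a.eval x := hxu
      have hap : a ≠ p := fun h => ha' (h ▸ hp)
      exact hfree x hxU a (hsub (Finset.mem_insert_self a s'')) p
        (hsub (Finset.mem_insert_of_mem hp)) hap (by rw [← hxu', ← hpe])
    rcases (isPreconnected_iff_subset_of_disjoint_closed.mp hU) u v hucl hvcl hcup hdisj with h | h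
    · exact ⟨a, Finset.mem_insert_self a s'', fun x hx => h hx⟩
    · obtain ⟨p, hp, hpe⟩ := ih (fun p hp => hsub (Finset.mem_insert_of_mem hp))
        (fun x hx => by
          have := h hx
          simp only [hv, Set.mem_iUnion, Set.mem_setOf_eq] at this
          obtain ⟨p, hp, hpe⟩ := this
          exact ⟨p, hp, hpe⟩)
      exact ⟨p, Finset.mem_insert_of_mem hp, hpe⟩

/-- Pierce–Birkhoff conjecture in dimension 1: every continuous piecewise
polynomial function `ℝ → ℝ` is a finite sup of finite infs of polynomials. -/
theorem stmt_15 (f : ℝ → ℝ) (hcont : Continuous f)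
    (s : Finset (Polynomial ℝ)) (hs : ∀ a : ℝ, ∃ p ∈ s, f a = p.eval a) :
    ∃ (m k : ℕ) (q : Fin (m + 1) → Fin (k + 1) → Polynomial ℝ),
      ∀ x : ℝ, f x = Finset.univ.sup' Finset.univ_nonempty fun i =>
        Finset.univ.inf' Finset.univ_nonempty fun j => (q i j).eval x := by
  classical
  -- crossing points
  set Z : Finset ℝ := (s ×ˢ s).biUnion
    (fun pq => if pq.1 = pq.2 then ∅ else (pq.1 - pq.2).roots.toFinset) with hZ
  have hZmem : ∀ x : ℝ, ∀ p ∈ s, ∀ q ∈ s, p ≠ q → p.eval x = q.eval x → x ∈ Z := by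
    intro x p hp q hq hne heq
    rw [hZ, Finset.mem_biUnion]
    refine ⟨(p, q), Finset.mem_product.mpr ⟨hp, hq⟩, ?_⟩
    rw [if_neg (by simpa using hne)]
    rw [Multiset.mem_toFinset, Polynomial.mem_roots']
    constructor
    · exact sub_ne_zero.mpr hne
    · simp [Polynomial.IsRoot, sub_eq_zero, heq]
  set r : ℕ := Z.card with hr0
  set e : Fin r ≃o {z // z ∈ Z} := Z.orderIsoOfFin rfl with he
  set b : Fin r → ℝ := fun j => (e j : ℝ) with hb
  have hbmono : StrictMono b := fun i j hij => Subtype.coe_lt_coe.mpr (e.strictMono hij)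
  have hbsurj : ∀ z ∈ Z, ∃ j : Fin r, b j = z := by
    intro z hz
    refine ⟨e.symm ⟨z, hz⟩, ?_⟩
    simp [hb]
  have hlem : ∀ i : Fin (r + 1), 0 < i.1 → i.1 - 1 < r := by
    intro i h; have := i.isLt; omega
  -- intervals
  set I : Fin (r + 1) → Set ℝ := fun i =>
    {x : ℝ | (∀ h : 0 < i.1, b ⟨i.1 - 1, hlem i h⟩ ≤ x) ∧ (∀ h : i.1 < r, x ≤ b ⟨i.1, h⟩)}
    with hI
  -- crossing-freeness off Z
  have hOfree : ∀ O : Set ℝ, (∀ j : Fin r, b j ∉ O) →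
      ∀ x ∈ O, ∀ p ∈ s, ∀ q ∈ s, p ≠ q → p.eval x ≠ q.eval x := by
    intro O hO x hx p hp q hq hne heq
    obtain ⟨j, hj⟩ := hbsurj x (hZmem x p hp q hq hne heq)
    exact hO j (hj ▸ hx)
  -- each interval carries a single polynomial
  have hpiece : ∀ i : Fin (r + 1), ∃ p ∈ s, ∀ x ∈ I i, f x = p.eval x := by
    intro i
    by_cases h0 : 0 < i.1 <;> by_cases hir : i.1 < r
    · -- interior interval Icc
      set t1 : ℝ := b ⟨i.1 - 1, hlem i h0⟩ with ht1
      set t2 : ℝ := b ⟨i.1, hir⟩ with ht2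
      have ht12 : t1 < t2 := hbmono (by simp only [Fin.lt_def]; omega)
      obtain ⟨p, hp, hpe⟩ := constancy f hcont s (Set.Ioo t1 t2) isPreconnected_Ioo
        (Set.nonempty_Ioo.mpr ht12) (fun x _ => hs x)
        (hOfree _ (by
          intro j hj
          simp only [Set.mem_Ioo] at hj
          have h1 : (⟨i.1 - 1, hlem i h0⟩ : Fin r) < j := hbmono.lt_iff_lt.mp hj.1
          have h2 : j < (⟨i.1, hir⟩ : Fin r) := hbmono.lt_iff_lt.mp hj.2
          simp only [Fin.lt_def] at h1 h2
          omega))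
      refine ⟨p, hp, ?_⟩
      intro x hx
      obtain ⟨hx1, hx2⟩ := hx
      have hxm : x ∈ Set.Icc t1 t2 := ⟨hx1 h0, hx2 hir⟩
      rw [← closure_Ioo (ne_of_lt ht12)] at hxm
      exact Set.EqOn.closure (fun y hy => hpe y hy) hcont (Polynomial.continuous p) hxm
    · -- right ray Ici
      set t1 : ℝ := b ⟨i.1 - 1, hlem i h0⟩ with ht1
      obtain ⟨p, hp, hpe⟩ := constancy f hcont s (Set.Ioi t1) isPreconnected_Ioi
        ⟨t1 + 1, by simp⟩ (fun x _ => hs x)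
        (hOfree _ (by
          intro j hj
          simp only [Set.mem_Ioi] at hj
          have h1 : (⟨i.1 - 1, hlem i h0⟩ : Fin r) < j := hbmono.lt_iff_lt.mp hj
          simp only [Fin.lt_def] at h1
          have := j.isLt
          have := i.isLt
          omega))
      refine ⟨p, hp, ?_⟩
      intro x hx
      obtain ⟨hx1, _⟩ := hx
      have hxm : x ∈ Set.Ici t1 := hx1 h0
      rw [← closure_Ioi] at hxm
      exact Set.EqOn.closure (fun y hy => hpe y hy) hcont (Polynomial.continuous p) hxm
    · -- left ray Iic
      set t2 : ℝ := b ⟨i.1, hir⟩ with ht2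
      obtain ⟨p, hp, hpe⟩ := constancy f hcont s (Set.Iio t2) isPreconnected_Iio
        ⟨t2 - 1, by simp⟩ (fun x _ => hs x)
        (hOfree _ (by
          intro j hj
          simp only [Set.mem_Iio] at hj
          have h1 : j < (⟨i.1, hir⟩ : Fin r) := hbmono.lt_iff_lt.mp hj
          simp only [Fin.lt_def] at h1
          omega))
      refine ⟨p, hp, ?_⟩
      intro x hx
      obtain ⟨_, hx2⟩ := hx
      have hxm : x ∈ Set.Iic t2 := hx2 hir
      rw [← closure_Iio] at hxm
      exact Set.EqOn.closure (fun y hy => hpe y hy) hcont (Polynomial.continuous p) hxm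
    · -- whole line
      obtain ⟨p, hp, hpe⟩ := constancy f hcont s Set.univ isPreconnected_univ
        ⟨0, trivial⟩ (fun x _ => hs x)
        (hOfree _ (by
          intro j
          have := j.isLt
          omega))
      exact ⟨p, hp, fun x _ => hpe x trivial⟩
  choose g hgs hgI using hpiece
  -- covering
  have hcover : ∀ x : ℝ, ∃ i : Fin (r + 1), x ∈ I i := by
    intro x
    set F : Finset (Fin r) := Finset.univ.filter (fun j => b j < x) with hF
    by_cases hFe : F.Nonempty
    · set jm := F.max' hFe with hjm
      have hjmlt : b jm < x := (Finset.mem_filter.mp (F.max'_mem hFe)).2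
      refine ⟨⟨jm.1 + 1, by have := jm.isLt; omega⟩, fun h => ?_, fun h => ?_⟩
      · exact le_of_lt hjmlt
      · by_contra hlt
        push_neg at hlt
        have hmem : (⟨jm.1 + 1, h⟩ : Fin r) ∈ F :=
          Finset.mem_filter.mpr ⟨Finset.mem_univ _, hlt⟩
        have := Finset.le_max' F _ hmem
        rw [← hjm] at this
        simp only [Fin.le_def] at this
        omega
    · refine ⟨⟨0, by omega⟩, fun h => absurd h (Nat.lt_irrefl 0), fun h => ?_⟩
      by_contra hlt
      push_neg at hlt
      exact hFe ⟨⟨0, h⟩, Finset.mem_filter.mpr ⟨Finset.mem_univ _, hlt⟩⟩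
  -- guards
  have hguard : ∀ i : Fin (r + 1), ∃ L R : ℝ[X],
      (∀ x ∈ I i, (g i).eval x ≤ L.eval x ∧ (g i).eval x ≤ R.eval x) ∧
      (∀ x : ℝ, x ∉ I i → L.eval x ≤ f x ∨ R.eval x ≤ f x) := by
    intro i
    -- construct L
    have hLex : ∃ L : ℝ[X],
        (∀ x ∈ I i, (g i).eval x ≤ L.eval x) ∧
        (∀ h : 0 < i.1, ∀ x : ℝ, x < b ⟨i.1 - 1, hlem i h⟩ → L.eval x ≤ f x) := by
      by_cases h0 : 0 < i.1
      · set t : ℝ := b ⟨i.1 - 1, hlem i h0⟩ with ht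
        set il : Fin (r + 1) := ⟨i.1 - 1, by have := i.isLt; omega⟩ with hil
        set δ : ℝ := if h1 : 1 < i.1 then t - b ⟨i.1 - 2, by have := i.isLt; omega⟩ else 1
          with hδ
        have hδ0 : 0 < δ := by
          rw [hδ]
          split
          · rename_i h1
            have : b ⟨i.1 - 2, by have := i.isLt; omega⟩ < b ⟨i.1 - 1, hlem i h0⟩ :=
              hbmono (by simp [Fin.lt_def]; omega)
            rw [ht]; linarith
          · exact one_pos
        have hIcc : Set.Icc (t - δ) t ⊆ I il := by
          intro x hx
          obtain ⟨hx1, hx2⟩ := hx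
          constructor
          · intro h
            have hi1 : 1 < i.1 := by simp only [hil] at h; omega
            rw [hδ, dif_pos hi1] at hx1
            have : t - (t - b ⟨i.1 - 2, by have := i.isLt; omega⟩) =
                b ⟨i.1 - 2, by have := i.isLt; omega⟩ := by ring
            rw [this] at hx1
            have hidx : (⟨il.1 - 1, hlem il h⟩ : Fin r) =
                ⟨i.1 - 2, by have := i.isLt; omega⟩ := by
              simp only [hil]; congr 1
            rw [hidx]
            exact hx1
          · intro h
            have hidx : (⟨il.1, h⟩ : Fin r) = ⟨i.1 - 1, hlem i h0⟩ := by
              simp only [hil]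
            rw [hidx]
            exact hx2
        have htIi : t ∈ I i := by
          constructor
          · intro h; exact le_refl _
          · intro h
            exact le_of_lt (hbmono (by simp only [Fin.lt_def]; omega))
        have htIl : t ∈ I il := hIcc ⟨by linarith, le_refl t⟩
        have hmatch : (g i).eval t = (g il).eval t := by
          rw [← hgI i t htIi, ← hgI il t htIl]
        obtain ⟨L, hL1, hL2, hL3⟩ := leftguard t δ hδ0 (g i) (g il) hmatch s
        refine ⟨L, ?_, ?_⟩
        · intro x hx
          exact hL3 x (hx.1 h0)
        · intro h x hxlt
          rcases le_or_gt x (t - δ) with hc | hc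
          · obtain ⟨p, hp, hpe⟩ := hs x
            rw [hpe]
            exact hL2 x hc p hp
          · have hxI : x ∈ I il := hIcc ⟨le_of_lt hc, le_of_lt hxlt⟩
            rw [hgI il x hxI]
            exact hL1 x (le_of_lt hc) (le_of_lt hxlt)
      · exact ⟨g i, fun x _ => le_refl _, fun h => absurd h h0⟩
    -- construct R
    have hRex : ∃ R : ℝ[X],
        (∀ x ∈ I i, (g i).eval x ≤ R.eval x) ∧
        (∀ h : i.1 < r, ∀ x : ℝ, b ⟨i.1, h⟩ < x → R.eval x ≤ f x) := by
      by_cases hir : i.1 < r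
      · set t : ℝ := b ⟨i.1, hir⟩ with ht
        set ir' : Fin (r + 1) := ⟨i.1 + 1, by omega⟩ with hir'
        set δ : ℝ := if h1 : i.1 + 1 < r then b ⟨i.1 + 1, h1⟩ - t else 1 with hδ
        have hδ0 : 0 < δ := by
          rw [hδ]
          split
          · rename_i h1
            have : b ⟨i.1, hir⟩ < b ⟨i.1 + 1, h1⟩ := hbmono (by simp [Fin.lt_def])
            rw [ht]; linarith
          · exact one_pos
        have hIcc : Set.Icc t (t + δ) ⊆ I ir' := by
          intro x hx
          obtain ⟨hx1, hx2⟩ := hx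
          constructor
          · intro h
            have hidx : (⟨ir'.1 - 1, hlem ir' h⟩ : Fin r) = ⟨i.1, hir⟩ :=
              Fin.ext (by show ir'.1 - 1 = i.1; simp only [hir']; omega)
            rw [hidx]
            exact hx1
          · intro h
            have h1 : i.1 + 1 < r := by simp only [hir'] at h; exact h
            rw [hδ, dif_pos h1] at hx2
            have heq2 : t + (b ⟨i.1 + 1, h1⟩ - t) = b ⟨i.1 + 1, h1⟩ := by ring
            rw [heq2] at hx2
            have hidx : (⟨ir'.1, h⟩ : Fin r) = ⟨i.1 + 1, h1⟩ := by
              simp only [hir']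
            rw [hidx]
            exact hx2
        have htIi : t ∈ I i := by
          constructor
          · intro h
            exact le_of_lt (hbmono (by simp only [Fin.lt_def]; omega))
          · intro h; exact le_refl _
        have htIr : t ∈ I ir' := hIcc ⟨le_refl t, by linarith⟩
        have hmatch : (g i).eval t = (g ir').eval t := by
          rw [← hgI i t htIi, ← hgI ir' t htIr]
        obtain ⟨R, hR1, hR2, hR3⟩ := rightguard t δ hδ0 (g i) (g ir') hmatch s
        refine ⟨R, ?_, ?_⟩
        · intro x hx
          exact hR3 x (hx.2 hir)
        · intro h x hxlt
          rcases le_or_gt (t + δ) x with hc | hc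
          · obtain ⟨p, hp, hpe⟩ := hs x
            rw [hpe]
            exact hR2 x hc p hp
          · have hxI : x ∈ I ir' := hIcc ⟨le_of_lt hxlt, le_of_lt hc⟩
            rw [hgI ir' x hxI]
            exact hR1 x (le_of_lt hxlt) (le_of_lt hc)
      · exact ⟨g i, fun x _ => le_refl _, fun h => absurd h hir⟩
    obtain ⟨L, hLa, hLb⟩ := hLex
    obtain ⟨R, hRa, hRb⟩ := hRex
    refine ⟨L, R, fun x hx => ⟨hLa x hx, hRa x hx⟩, ?_⟩
    intro x hx
    by_cases hA : ∀ h : 0 < i.1, b ⟨i.1 - 1, hlem i h⟩ ≤ x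
    · by_cases hB : ∀ h : i.1 < r, x ≤ b ⟨i.1, h⟩
      · exact absurd ⟨hA, hB⟩ hx
      · obtain ⟨h, hxlt⟩ := not_forall.mp hB
        push_neg at hxlt
        exact Or.inr (hRb h x hxlt)
    · obtain ⟨h, hxlt⟩ := not_forall.mp hA
      push_neg at hxlt
      exact Or.inl (hLb h x hxlt)
  choose L R hgLR hnotI using hguard
  -- assemble
  refine ⟨r, 2, fun i => ![g i, L i, R i], ?_⟩
  intro x
  set Φ : Fin (r + 1) → ℝ := fun i =>
    Finset.univ.inf' Finset.univ_nonempty fun j : Fin 3 => (![g i, L i, R i] j).eval x with hΦ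
  show f x = Finset.univ.sup' Finset.univ_nonempty Φ
  apply le_antisymm
  · obtain ⟨i₀, hi₀⟩ := hcover x
    have h1 : f x ≤ Φ i₀ := by
      rw [hΦ]
      apply Finset.le_inf'
      intro j _
      fin_cases j
      · show f x ≤ (g i₀).eval x
        exact le_of_eq (hgI i₀ x hi₀)
      · show f x ≤ (L i₀).eval x
        rw [hgI i₀ x hi₀]
        exact (hgLR i₀ x hi₀).1
      · show f x ≤ (R i₀).eval x
        rw [hgI i₀ x hi₀]
        exact (hgLR i₀ x hi₀).2
    exact le_trans h1 (Finset.le_sup' Φ (Finset.mem_univ i₀))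
  · apply Finset.sup'_le
    intro i _
    by_cases hx : x ∈ I i
    · have h2 : Φ i ≤ (g i).eval x :=
        Finset.inf'_le (b := (0 : Fin 3)) _ (Finset.mem_univ _)
      rw [hgI i x hx]
      exact h2
    · rcases hnotI i x hx with h | h
      · exact le_trans (Finset.inf'_le (b := (1 : Fin 3)) _ (Finset.mem_univ _)) h
      · exact le_trans (Finset.inf'_le (b := (2 : Fin 3)) _ (Finset.mem_univ _)) h
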